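/- The space of gl(1|1)-invariant vectors in P_{n₁} ⊗ P_{n₂} with n₁ + n₂ = 0 is exactly 2-dimensional, spanned by I₁ = t⊗b + r⊗l − l⊗r + b⊗t and I₂ = b⊗b. -/
import Mathlib


open Matrix Kronecker

noncomputable section Gl11

def PN (n : ℂ) : Matrix (Fin 4) (Fin 4) ℂ :=
  !![n+1, 0, 0, 0; 0, n, 0, 0; 0, 0, n, 0; 0, 0, 0, n-1]
def Pp : Matrix (Fin 4) (Fin 4) ℂ :=
  (1/2 : ℂ) • !![0, 1, 1, 0; 0, 0, 0, 1; 0, 0, 0, -1; 0, 0, 0, 0]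
def Pm : Matrix (Fin 4) (Fin 4) ℂ :=
  (1/2 : ℂ) • !![0, 0, 0, 0; -1, 0, 0, 0; 1, 0, 0, 0; 0, 1, 1, 0]
def Par4 : Matrix (Fin 4) (Fin 4) ℂ :=
  !![-1, 0, 0, 0; 0, 1, 0, 0; 0, 0, 1, 0; 0, 0, 0, -1]

/-- Basis vectors of `P_n` in the chosen coordinates. -/
def vt : Fin 4 → ℂ := ![0, 1, 1, 0]
def vr : Fin 4 → ℂ := ![1, 0, 0, 0]
def vl : Fin 4 → ℂ := ![0, 0, 0, 1]
def vb : Fin 4 → ℂ := ![0, 1/2, -1/2, 0]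

/-- Tensor product of vectors. -/
def tens (v w : Fin 4 → ℂ) : Fin 4 × Fin 4 → ℂ := fun p => v p.1 * w p.2

/-- Invariance under the graded diagonal `gl(1|1)`-action on `P_{n₁} ⊗ P_{n₂}`
(`E` acts by zero). -/
def IsInvPP (n₁ n₂ : ℂ) (x : Fin 4 × Fin 4 → ℂ) : Prop :=
  (PN n₁ ⊗ₖ (1 : Matrix (Fin 4) (Fin 4) ℂ)
    + (1 : Matrix (Fin 4) (Fin 4) ℂ) ⊗ₖ PN n₂).mulVec x = 0 ∧
  (Pp ⊗ₖ (1 : Matrix (Fin 4) (Fin 4) ℂ) + Par4 ⊗ₖ Pp).mulVec x = 0 ∧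
  (Pm ⊗ₖ (1 : Matrix (Fin 4) (Fin 4) ℂ) + Par4 ⊗ₖ Pm).mulVec x = 0

/-- `I₁ = t⊗b + r⊗l − l⊗r + b⊗t`. -/
def I₁ : Fin 4 × Fin 4 → ℂ := tens vt vb + tens vr vl - tens vl vr + tens vb vt
/-- `I₂ = b⊗b`. -/
def I₂ : Fin 4 × Fin 4 → ℂ := tens vb vb

set_option maxHeartbeats 4000000

/-- For `n₁ + n₂ = 0`, the space of `gl(1|1)`-invariant vectors of
`P_{n₁} ⊗ P_{n₂}` is exactly two-dimensional, spanned by `I₁` and `I₂`. -/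
theorem stmt13 (n₁ n₂ : ℂ) (hn : n₁ + n₂ = 0) :
    LinearIndependent ℂ ![I₁, I₂] ∧
    ∀ x : Fin 4 × Fin 4 → ℂ,
      IsInvPP n₁ n₂ x ↔ ∃ a c : ℂ, x = a • I₁ + c • I₂ := by
  have hn2 : n₂ = -n₁ := by linear_combination hn
  subst hn2
  constructor
  · rw [linearIndependent_fin2]
    constructor
    · intro h
      have := congrFun h (1,1)
      simp [I₂, tens, vb] at this
    · intro a h
      have := congrFun h (0,3)
      simp [I₁, I₂, tens, vt, vr, vl, vb] at this
  · intro x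
    constructor
    · rintro ⟨h1, h2, h3⟩
      refine ⟨x (0,3), -4 * x (1,2), ?_⟩
      have n00 := congrFun h1 (0,0); have n01 := congrFun h1 (0,1)
      have n02 := congrFun h1 (0,2); have n10 := congrFun h1 (1,0)
      have n13 := congrFun h1 (1,3); have n20 := congrFun h1 (2,0)
      have n23 := congrFun h1 (2,3); have n31 := congrFun h1 (3,1)
      have n32 := congrFun h1 (3,2); have n33 := congrFun h1 (3,3)
      have p01 := congrFun h2 (0,1); have p10 := congrFun h2 (1,0)
      have m13 := congrFun h3 (1,3); have m23 := congrFun h3 (2,3)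
      simp [Matrix.mulVec, dotProduct, Fintype.sum_prod_type, Fin.sum_univ_four,
        Matrix.one_apply, PN, Pp, Pm, Par4, -mul_eq_zero]
        at n00 n01 n02 n10 n13 n20 n23
      simp [Matrix.mulVec, dotProduct, Fintype.sum_prod_type, Fin.sum_univ_four,
        Matrix.one_apply, PN, Pp, Pm, Par4, -mul_eq_zero]
        at n31 n32 n33 p01 p10 m13 m23
      funext p
      fin_cases p <;>
        simp [I₁, I₂, tens, vt, vr, vl, vb]
      · first | linear_combination n00 / 2 | linear_combination -n00 / 2 | linear_combination n00
      · first | linear_combination n01 | linear_combination -n01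
      · first | linear_combination n02 | linear_combination -n02
      · first | linear_combination n10 | linear_combination -n10
      · linear_combination 2 * m13
      · ring
      · first | linear_combination n13 | linear_combination -n13
      · first | linear_combination n20 | linear_combination -n20
      · linear_combination 2 * p01 - 2 * m13
      · linear_combination 2 * m23 - 2 * p01 + 2 * m13
      · first | linear_combination n23 | linear_combination -n23
      · linear_combination 2 * p10 - 2 * m13
      · first | linear_combination n31 | linear_combination -n31
      · first | linear_combination n32 | linear_combination -n32
      · first | linear_combination n33 / 2 | linear_combination -n33 / 2 | linear_combination n33
    · rintro ⟨a, c, rfl⟩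
      refine ⟨?_, ?_, ?_⟩ <;>
      · funext p
        fin_cases p <;>
          simp [Matrix.mulVec, dotProduct, Fintype.sum_prod_type, Fin.sum_univ_four,
            Matrix.one_apply, PN, Pp, Pm, Par4, I₁, I₂, tens, vt, vr, vl, vb,
            -mul_eq_zero] <;>
          ring

end Gl11
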